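/- Let Y be a finite nonempty type, q a probability mass function on Y, r : Y → ℝ, and τ > 0. Then the supremum, over all probability mass functions p on Y whose support is contained in the support of q, of Σ_y p(y)·r(y) − τ·Σ_{y : p(y)>0} p(y)·log(p(y)/q(y)), equals τ·log(Σ_y q(y)·exp(r(y)/τ)). -/

import Mathlib

open scoped Classical

/-- The Kullback–Leibler divergence between two probability mass functions on a
finite type, summing only over points where `p` is positive. -/
noncomputable def klDiv {Y : Type*} [Fintype Y] (p q : Y → ℝ) : ℝ :=
  ∑ y ∈ Finset.univ.filter (fun y => 0 < p y), p y * Real.log (p y / q y)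

lemma sum_filter_pos_mul {Y : Type*} [Fintype Y] (p g : Y → ℝ) (hp : ∀ y, 0 ≤ p y) :
    ∑ y ∈ Finset.univ.filter (fun y => 0 < p y), p y * g y = ∑ y, p y * g y := by
  refine Finset.sum_filter_of_ne fun y _ h => ?_
  rcases (hp y).eq_or_lt with h0 | h0
  · simp [← h0] at h
  · exact h0

theorem dro_stmt_0 {Y : Type*} [Fintype Y] [Nonempty Y]
    (q : Y → ℝ) (hq0 : ∀ y, 0 ≤ q y) (hq1 : ∑ y, q y = 1)
    (r : Y → ℝ) (τ : ℝ) (hτ : 0 < τ) :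
    sSup {v : ℝ | ∃ p : Y → ℝ,
        (∀ y, 0 ≤ p y) ∧ (∑ y, p y = 1) ∧ (∀ y, 0 < p y → 0 < q y) ∧
        v = (∑ y, p y * r y) - τ * klDiv p q} =
      τ * Real.log (∑ y, q y * Real.exp (r y / τ)) := by
  set Z : ℝ := ∑ y, q y * Real.exp (r y / τ) with hZdef
  have hZpos : 0 < Z := by
    have hex : ∃ y, 0 < q y := by
      by_contra h
      push_neg at h
      have h0 : ∀ y, q y = 0 := fun y => le_antisymm (h y) (hq0 y)
      simp [h0] at hq1
    obtain ⟨y0, hy0⟩ := hex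
    calc (0 : ℝ) < q y0 * Real.exp (r y0 / τ) := mul_pos hy0 (Real.exp_pos _)
      _ ≤ Z := Finset.single_le_sum (f := fun y => q y * Real.exp (r y / τ))
          (fun y _ => mul_nonneg (hq0 y) (Real.exp_pos _).le) (Finset.mem_univ y0)
  set pstar : Y → ℝ := fun y => q y * Real.exp (r y / τ) / Z with hps
  have hps0 : ∀ y, 0 ≤ pstar y := fun y =>
    div_nonneg (mul_nonneg (hq0 y) (Real.exp_pos _).le) hZpos.le
  have hps1 : ∑ y, pstar y = 1 := by
    simp only [hps]
    rw [← Finset.sum_div, ← hZdef, div_self hZpos.ne']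
  have hpsq : ∀ y, 0 < pstar y → 0 < q y := by
    intro y hy
    by_contra h
    push_neg at h
    have : q y = 0 := le_antisymm h (hq0 y)
    simp [hps, this] at hy
  have hlogpstar : ∀ y, 0 < q y →
      Real.log (pstar y) = Real.log (q y) + r y / τ - Real.log Z := by
    intro y hqy
    simp only [hps]
    rw [Real.log_div (mul_pos hqy (Real.exp_pos _)).ne' hZpos.ne',
      Real.log_mul hqy.ne' (Real.exp_pos _).ne', Real.log_exp]
  apply IsGreatest.csSup_eq
  constructor
  · -- membership: achieved by pstar
    refine ⟨pstar, hps0, hps1, hpsq, ?_⟩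
    have hkl : klDiv pstar q = (∑ y, pstar y * r y) / τ - Real.log Z := by
      unfold klDiv
      have hterm : ∀ y ∈ Finset.univ.filter (fun y => 0 < pstar y),
          pstar y * Real.log (pstar y / q y) = pstar y * (r y / τ - Real.log Z) := by
        intro y hy
        simp only [Finset.mem_filter] at hy
        have hqy := hpsq y hy.2
        rw [Real.log_div hy.2.ne' hqy.ne', hlogpstar y hqy]
        ring_nf
      rw [Finset.sum_congr rfl hterm]
      have h1 : ∑ y ∈ Finset.univ.filter (fun y => 0 < pstar y),
          pstar y * (r y / τ - Real.log Z) = ∑ y, pstar y * (r y / τ - Real.log Z) :=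
        sum_filter_pos_mul pstar _ hps0
      rw [h1]
      have : ∑ y, pstar y * (r y / τ - Real.log Z)
          = (∑ y, pstar y * r y) / τ - (∑ y, pstar y) * Real.log Z := by
        rw [Finset.sum_div, Finset.sum_mul, ← Finset.sum_sub_distrib]
        refine Finset.sum_congr rfl fun y _ => by ring
      rw [this, hps1, one_mul]
    rw [hkl]
    field_simp
    ring
  · -- upper bound
    rintro v ⟨p, hp0, hp1, hpq, rfl⟩
    have hS : ∑ y ∈ Finset.univ.filter (fun y => 0 < p y), p y = 1 := by
      have h := sum_filter_pos_mul p (fun _ => 1) hp0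
      simp only [mul_one] at h
      rw [h, hp1]
    have hSr : ∑ y ∈ Finset.univ.filter (fun y => 0 < p y), p y * r y = ∑ y, p y * r y :=
      sum_filter_pos_mul p r hp0
    have hSstar : ∑ y ∈ Finset.univ.filter (fun y => 0 < p y), pstar y ≤ 1 := by
      rw [← hps1]
      exact Finset.sum_le_sum_of_subset_of_nonneg (Finset.filter_subset _ _)
        (fun y _ _ => hps0 y)
    -- per-term inequality
    have hterm : ∀ y ∈ Finset.univ.filter (fun y => 0 < p y),
        p y * (r y / τ - Real.log Z) + (p y - pstar y) ≤ p y * Real.log (p y / q y) := by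
      intro y hy
      simp only [Finset.mem_filter] at hy
      have hpy := hy.2
      have hqy := hpq y hpy
      have hpsy : 0 < pstar y := div_pos (mul_pos hqy (Real.exp_pos _)) hZpos
      have hlog : Real.log (pstar y / p y) ≤ pstar y / p y - 1 :=
        Real.log_le_sub_one_of_pos (div_pos hpsy hpy)
      have hmul : p y * Real.log (pstar y / p y) ≤ pstar y - p y := by
        have := mul_le_mul_of_nonneg_left hlog hpy.le
        calc p y * Real.log (pstar y / p y) ≤ p y * (pstar y / p y - 1) := this
          _ = pstar y - p y := by field_simp
      have hlogs : Real.log (pstar y / p y)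
          = Real.log (q y) + r y / τ - Real.log Z - Real.log (p y) := by
        rw [Real.log_div hpsy.ne' hpy.ne', hlogpstar y hqy]
      have hlogpq : Real.log (p y / q y) = Real.log (p y) - Real.log (q y) :=
        Real.log_div hpy.ne' hqy.ne'
      rw [hlogs] at hmul
      rw [hlogpq]
      nlinarith [hmul]
    have hsum : (∑ y, p y * r y) / τ - Real.log Z + (1 - ∑ y ∈ Finset.univ.filter
        (fun y => 0 < p y), pstar y) ≤ klDiv p q := by
      unfold klDiv
      have := Finset.sum_le_sum hterm
      rw [Finset.sum_add_distrib, Finset.sum_sub_distrib] at this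
      have hmid : ∑ y ∈ Finset.univ.filter (fun y => 0 < p y), p y * (r y / τ - Real.log Z)
          = (∑ y, p y * r y) / τ - Real.log Z := by
        rw [sum_filter_pos_mul p _ hp0]
        have : ∑ y, p y * (r y / τ - Real.log Z)
            = (∑ y, p y * r y) / τ - (∑ y, p y) * Real.log Z := by
          rw [Finset.sum_div, Finset.sum_mul, ← Finset.sum_sub_distrib]
          refine Finset.sum_congr rfl fun y _ => by ring
        rw [this, hp1, one_mul]
      rw [hmid, hS] at this
      exact this
    have hkl : (∑ y, p y * r y) / τ - Real.log Z ≤ klDiv p q := by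
      have : (0:ℝ) ≤ 1 - ∑ y ∈ Finset.univ.filter (fun y => 0 < p y), pstar y := by
        linarith
      linarith
    have := mul_le_mul_of_nonneg_left hkl hτ.le
    have hτne : τ ≠ 0 := hτ.ne'
    calc (∑ y, p y * r y) - τ * klDiv p q
        ≤ (∑ y, p y * r y) - τ * ((∑ y, p y * r y) / τ - Real.log Z) := by linarith
      _ = τ * Real.log Z := by field_simp; ring
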